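/- Let κ : ℝ → ℝ be continuous on [0, ∞), with κ(t) ≤ 0 for all t ≥ 0 and κ nonincreasing on [0, ∞) (i.e., κ(s) ≥ κ(t) whenever 0 ≤ s ≤ t). Let G : ℝ → ℝ be twice differentiable on [0, ∞) with G″(t) + κ(t)·G(t) = 0 for all t ≥ 0, G(0) = 0 and G′(0) = 1. Then for every t ≥ 0 one has t ≤ G(t), and moreover G(t) ≤ t if κ(t) = 0, while G(t) ≤ sinh(√(−κ(t))·t) / √(−κ(t)) if κ(t) < 0. -/

import Mathlib

open Set

private lemma jacobi_mono_aux {f f' : ℝ → ℝ} {a b : ℝ}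
    (hc : ContinuousOn f (Icc a b))
    (hd : ∀ t ∈ Ioo a b, HasDerivAt f (f' t) t)
    (h0 : ∀ t ∈ Ioo a b, 0 ≤ f' t) :
    ∀ t ∈ Icc a b, f a ≤ f t := by
  rcases le_or_gt a b with hab | hab
  · have hm : MonotoneOn f (Icc a b) := by
      apply monotoneOn_of_deriv_nonneg (convex_Icc a b) hc
      · intro x hx
        rw [interior_Icc] at hx
        exact (hd x hx).differentiableAt.differentiableWithinAt
      · intro x hx
        rw [interior_Icc] at hx
        rw [(hd x hx).deriv]
        exact h0 x hx
    exact fun t ht => hm (left_mem_Icc.2 hab) ht ht.1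
  · exact fun t ht => absurd (ht.1.trans ht.2) (not_le.2 hab)

/-- **Lemma 5.2 (two-sided estimate of the Jacobi equation solution)**: if `κ` is
continuous, nonpositive and nonincreasing on `[0, ∞)` and `G` solves the Jacobi equation
`G″ + κ·G = 0` on `[0, ∞)` with `G(0) = 0`, `G′(0) = 1` (derivatives taken within
`[0, ∞)`), then `χ(0,t) = t ≤ G(t) ≤ χ(√(−κ(t)), t)` for all `t ≥ 0`, where
`χ(0,t) = t` and `χ(s,t) = sinh(st)/s` for `s ≠ 0`. -/
theorem jacobi_solution_two_sided_estimate
    (κ G : ℝ → ℝ)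
    (hκcont : ContinuousOn κ (Ici 0))
    (hκnonpos : ∀ t ∈ Ici (0 : ℝ), κ t ≤ 0)
    (hκanti : AntitoneOn κ (Ici 0))
    (hG1 : ∀ t ∈ Ici (0 : ℝ), DifferentiableWithinAt ℝ G (Ici 0) t)
    (hG2 : ∀ t ∈ Ici (0 : ℝ), DifferentiableWithinAt ℝ (derivWithin G (Ici 0)) (Ici 0) t)
    (hODE : ∀ t ∈ Ici (0 : ℝ),
      derivWithin (derivWithin G (Ici 0)) (Ici 0) t + κ t * G t = 0)
    (hG0 : G 0 = 0) (hG'0 : derivWithin G (Ici 0) 0 = 1) :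
    ∀ t ∈ Ici (0 : ℝ),
      t ≤ G t ∧
      (κ t = 0 → G t ≤ t) ∧
      (κ t < 0 → G t ≤ Real.sinh (Real.sqrt (-κ t) * t) / Real.sqrt (-κ t)) := by
  set G' : ℝ → ℝ := derivWithin G (Ici 0) with hG'def
  set G'' : ℝ → ℝ := derivWithin G' (Ici 0) with hG''def
  -- continuity
  have hGc : ContinuousOn G (Ici 0) := fun t ht => (hG1 t ht).continuousWithinAt
  have hG'c : ContinuousOn G' (Ici 0) := fun t ht => (hG2 t ht).continuousWithinAt
  -- derivatives at interior points
  have hdG : ∀ t ∈ Ioi (0:ℝ), HasDerivAt G (G' t) t := by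
    intro t ht
    have h1 : Ici (0:ℝ) ∈ nhds t := Ici_mem_nhds ht
    have h2 := ((hG1 t (le_of_lt ht : (0:ℝ) ≤ t)).differentiableAt h1).hasDerivAt
    rwa [hG'def, derivWithin_of_mem_nhds h1]
  have hdG' : ∀ t ∈ Ioi (0:ℝ), HasDerivAt G' (G'' t) t := by
    intro t ht
    have h1 : Ici (0:ℝ) ∈ nhds t := Ici_mem_nhds ht
    have h2 := ((hG2 t (le_of_lt ht : (0:ℝ) ≤ t)).differentiableAt h1).hasDerivAt
    rwa [hG''def, derivWithin_of_mem_nhds h1]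
  have hODE' : ∀ t ∈ Ici (0:ℝ), G'' t = -κ t * G t := by
    intro t ht
    have := hODE t ht
    linarith [this]
  -- positivity of G just to the right of 0
  have L1 : ∃ ε > (0:ℝ), ∀ x ∈ Ioc (0:ℝ) ε, 0 ≤ G x := by
    have hW : HasDerivWithinAt G 1 (Ici 0) 0 := by
      have := (hG1 0 Set.self_mem_Ici).hasDerivWithinAt
      rwa [show derivWithin G (Ici 0) 0 = 1 from hG'0] at this
    have hslope := hasDerivWithinAt_iff_tendsto_slope.mp hW
    rw [Ici_sdiff_left] at hslope
    have hev : ∀ᶠ x in nhdsWithin (0:ℝ) (Ioi 0), (0:ℝ) < slope G 0 x :=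
      hslope.eventually (eventually_gt_nhds one_pos)
    obtain ⟨u, hu, hsub⟩ := mem_nhdsGT_iff_exists_Ioc_subset.mp hev
    refine ⟨u, hu, fun x hx => ?_⟩
    have hs : (0:ℝ) < slope G 0 x := hsub hx
    have hx0 : (0:ℝ) < x := hx.1
    rw [slope_def_field] at hs
    rw [hG0, sub_zero, sub_zero] at hs
    rcases (div_pos_iff.mp hs) with ⟨h1, _⟩ | ⟨_, h2⟩
    · exact h1.le
    · linarith
  -- the workhorse: nonnegativity on an interval bootstraps the full lower bound
  have key : ∀ b ∈ Ici (0:ℝ), (∀ x ∈ Icc (0:ℝ) b, 0 ≤ G x) →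
      ∀ x ∈ Icc (0:ℝ) b, 1 ≤ G' x ∧ x ≤ G x := by
    intro b hb hpos
    have h1 : ∀ x ∈ Icc (0:ℝ) b, 1 ≤ G' x := by
      have := jacobi_mono_aux (f := G') (f' := G'') (a := 0) (b := b)
        (hG'c.mono Icc_subset_Ici_self)
        (fun t ht => hdG' t ht.1)
        (fun t ht => by
          rw [hODE' t (le_of_lt ht.1)]
          have hp := hpos t ⟨le_of_lt ht.1, le_of_lt ht.2⟩
          have hκ := hκnonpos t (le_of_lt ht.1)
          nlinarith)
      intro x hx
      have := this x hx
      rw [show G' 0 = 1 from hG'0] at this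
      exact this
    have h2 : ∀ x ∈ Icc (0:ℝ) b, x ≤ G x := by
      have := jacobi_mono_aux (f := fun x => G x - x) (f' := fun x => G' x - 1) (a := 0) (b := b)
        ((hGc.mono Icc_subset_Ici_self).sub continuousOn_id)
        (fun t ht => (hdG t ht.1).sub (hasDerivAt_id t))
        (fun t ht => by
          have := h1 t ⟨le_of_lt ht.1, le_of_lt ht.2⟩
          show (0:ℝ) ≤ G' t - 1
          linarith)
      intro x hx
      have h := this x hx
      have h' : G 0 - 0 ≤ G x - x := h
      rw [hG0, sub_zero] at h'
      linarith
    exact fun x hx => ⟨h1 x hx, h2 x hx⟩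
  -- nonnegativity of G on all of [0, ∞)
  have nonneg : ∀ T ∈ Ici (0:ℝ), ∀ x ∈ Icc (0:ℝ) T, 0 ≤ G x := by
    intro T hT
    rcases eq_or_lt_of_le (show (0:ℝ) ≤ T from hT) with hT0 | hT0
    · intro x hx
      have : x = 0 := le_antisymm (hT0 ▸ hx.2) hx.1
      rw [this, hG0]
    obtain ⟨ε, hε, hεpos⟩ := L1
    set m := min ε T with hm
    have hm0 : 0 < m := lt_min hε hT0
    set A := {x ∈ Icc (0:ℝ) T | ∀ s ∈ Icc (0:ℝ) x, 0 ≤ G s} with hA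
    have hmA : m ∈ A := by
      refine ⟨⟨hm0.le, min_le_right _ _⟩, fun s hs => ?_⟩
      rcases eq_or_lt_of_le hs.1 with h | h
      · rw [← h, hG0]
      · exact hεpos s ⟨h, hs.2.trans (min_le_left _ _)⟩
    have hbdd : BddAbove A := ⟨T, fun x hx => hx.1.2⟩
    have hAne : A.Nonempty := ⟨m, hmA⟩
    set z := sSup A with hz
    have hzT : z ≤ T := csSup_le hAne (fun x hx => hx.1.2)
    have hmz : m ≤ z := le_csSup hbdd hmA
    have hz0 : 0 < z := lt_of_lt_of_le hm0 hmz
    have hlt : ∀ s, 0 ≤ s → s < z → 0 ≤ G s := by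
      intro s hs0 hsz
      obtain ⟨x, hxA, hsx⟩ := exists_lt_of_lt_csSup hAne hsz
      exact hxA.2 s ⟨hs0, hsx.le⟩
    have hzprop : ∀ s ∈ Icc (0:ℝ) z, 0 ≤ G s := by
      intro s hs
      rcases lt_or_eq_of_le hs.2 with h | h
      · exact hlt s hs.1 h
      · -- s = z : limit argument
        rw [h]
        have hcz : ContinuousWithinAt G (Ico 0 z) z :=
          (hGc z hz0.le).mono Ico_subset_Ici_self
        have hne : (nhdsWithin z (Ico (0:ℝ) z)).NeBot := by
          rw [← mem_closure_iff_nhdsWithin_neBot, closure_Ico hz0.ne]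
          exact ⟨hz0.le, le_rfl⟩
        refine ge_of_tendsto hcz ?_
        filter_upwards [self_mem_nhdsWithin] with x hx
        exact hlt x hx.1 hx.2
    have hzeq : z = T := by
      by_contra hne
      have hzT' : z < T := lt_of_le_of_ne hzT hne
      have hGz : 0 < G z :=
        lt_of_lt_of_le hz0 ((key z hz0.le hzprop z ⟨hz0.le, le_rfl⟩).2)
      have hcont : ContinuousAt G z :=
        ((hG1 z hz0.le).differentiableAt (Ici_mem_nhds hz0)).continuousAt
      have hev : ∀ᶠ x in nhds z, 0 < G x := hcont.eventually (eventually_gt_nhds hGz)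
      obtain ⟨δ, hδ0, hδ⟩ := Metric.eventually_nhds_iff.mp hev
      set w := min (z + δ/2) T with hw
      have hw1 : z < w := lt_min (by linarith) hzT'
      have hwA : w ∈ A := by
        refine ⟨⟨le_trans hz0.le hw1.le, min_le_right _ _⟩, fun s hs => ?_⟩
        rcases le_or_gt s z with h | h
        · exact hzprop s ⟨hs.1, h⟩
        · refine le_of_lt (hδ ?_)
          rw [Real.dist_eq, abs_lt]
          constructor
          · linarith
          · have := hs.2.trans (min_le_left _ _)
            linarith
      exact absurd (le_csSup hbdd hwA) (not_le.2 hw1)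
    rw [hzeq] at hzprop
    exact hzprop
  -- final assembly
  intro T hT
  have hnonnegT := nonneg T hT
  have hkeyT := key T hT hnonnegT
  refine ⟨(hkeyT T ⟨hT, le_rfl⟩).2, ?_, ?_⟩
  · -- κ T = 0 : G T ≤ T
    intro hκT
    have hκ0 : ∀ t ∈ Icc (0:ℝ) T, κ t = 0 := by
      intro t ht
      have h1 : κ T ≤ κ t := hκanti ht.1 hT ht.2
      have h2 : κ t ≤ 0 := hκnonpos t ht.1
      rw [hκT] at h1
      linarith
    have hG''0 : ∀ t ∈ Ioo (0:ℝ) T, G'' t = 0 := by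
      intro t ht
      rw [hODE' t (le_of_lt ht.1), hκ0 t ⟨le_of_lt ht.1, le_of_lt ht.2⟩]
      ring
    have hG'le : ∀ x ∈ Icc (0:ℝ) T, G' x ≤ 1 := by
      have := jacobi_mono_aux (f := fun x => -G' x) (f' := fun x => -G'' x) (a := 0) (b := T)
        ((hG'c.mono Icc_subset_Ici_self).neg)
        (fun t ht => (hdG' t ht.1).neg)
        (fun t ht => by show (0:ℝ) ≤ -G'' t; rw [hG''0 t ht]; simp)
      intro x hx
      have h' : -G' 0 ≤ -G' x := this x hx
      linarith [hG'0, h']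
    have := jacobi_mono_aux (f := fun x => x - G x) (f' := fun x => 1 - G' x) (a := 0) (b := T)
      (continuousOn_id.sub (hGc.mono Icc_subset_Ici_self))
      (fun t ht => (hasDerivAt_id t).sub (hdG t ht.1))
      (fun t ht => by
        have := hG'le t ⟨le_of_lt ht.1, le_of_lt ht.2⟩
        show (0:ℝ) ≤ 1 - G' t
        linarith)
    have h : (0:ℝ) - G 0 ≤ T - G T := this T ⟨hT, le_rfl⟩
    rw [hG0, sub_zero] at h
    linarith
  · -- κ T < 0 : comparison with sinh
    intro hκT
    set s : ℝ := Real.sqrt (-κ T) with hsdef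
    have hs : 0 < s := Real.sqrt_pos.2 (by linarith)
    have hs2 : s ^ 2 = -κ T := Real.sq_sqrt (by linarith)
    have hκbound : ∀ t ∈ Icc (0:ℝ) T, 0 ≤ κ t + s ^ 2 := by
      intro t ht
      have h1 : κ T ≤ κ t := hκanti ht.1 hT ht.2
      rw [hs2]; linarith
    -- Step 1: exp(st) * (G' t - s G t) ≤ 1 on [0,T]
    have step1 : ∀ t ∈ Icc (0:ℝ) T, G' t - s * G t ≤ Real.exp (-(s * t)) := by
      have hu := jacobi_mono_aux
        (f := fun t => 1 - Real.exp (s * t) * (G' t - s * G t))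
        (f' := fun t => Real.exp (s * t) * (G t * (κ t + s ^ 2)))
        (a := 0) (b := T)
        (by
          apply continuousOn_const.sub
          exact ((Real.continuous_exp.comp (continuous_const.mul continuous_id)).continuousOn).mul
            (((hG'c.mono Icc_subset_Ici_self)).sub
              (continuousOn_const.mul (hGc.mono Icc_subset_Ici_self))))
        (fun t ht => by
          have he : HasDerivAt (fun t => Real.exp (s * t)) (Real.exp (s * t) * s) t := by
            simpa using ((hasDerivAt_id t).const_mul s).exp
          have hin : HasDerivAt (fun t => G' t - s * G t) (G'' t - s * G' t) t :=
            (hdG' t ht.1).sub ((hdG t ht.1).const_mul s)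
          have := (he.mul hin).const_sub 1
          refine this.congr_deriv ?_
          rw [hODE' t (le_of_lt ht.1)]
          ring)
        (fun t ht => by
          have h1 := nonneg T hT t ⟨le_of_lt ht.1, le_of_lt ht.2⟩
          have h2 := hκbound t ⟨le_of_lt ht.1, le_of_lt ht.2⟩
          show (0:ℝ) ≤ Real.exp (s * t) * (G t * (κ t + s ^ 2))
          positivity)
      intro t ht
      have h : 1 - Real.exp (s * 0) * (G' 0 - s * G 0) ≤
          1 - Real.exp (s * t) * (G' t - s * G t) := hu t ht
      rw [hG'0, hG0, mul_zero, Real.exp_zero] at h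
      norm_num at h
      have h1 : Real.exp (s * t) * (G' t - s * G t) ≤ 1 := h
      have hepos : (0:ℝ) < Real.exp (s * t) := Real.exp_pos _
      rw [Real.exp_neg, ← one_div, le_div_iff₀ hepos]
      linarith [h1, mul_comm (Real.exp (s * t)) (G' t - s * G t)]
    -- Step 2: integrate
    have step2 := jacobi_mono_aux
      (f := fun t => (1 - Real.exp (-(2 * s * t))) / (2 * s) - Real.exp (-(s * t)) * G t)
      (f' := fun t => Real.exp (-(2 * s * t)) - Real.exp (-(s * t)) * (G' t - s * G t))
      (a := 0) (b := T)
      (by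
        apply ContinuousOn.sub
        · exact (continuousOn_const.sub ((Real.continuous_exp.comp
            (continuous_const.mul continuous_id).neg).continuousOn)).div_const _
        · exact ((Real.continuous_exp.comp
            (continuous_const.mul continuous_id).neg).continuousOn).mul
            (hGc.mono Icc_subset_Ici_self))
      (fun t ht => by
        have he2 : HasDerivAt (fun t => Real.exp (-(2 * s * t)))
            (Real.exp (-(2 * s * t)) * (-(2 * s))) t := by
          simpa using (((hasDerivAt_id t).const_mul (2 * s)).neg).exp
        have he1 : HasDerivAt (fun t => Real.exp (-(s * t)))
            (Real.exp (-(s * t)) * (-s)) t := by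
          simpa using (((hasDerivAt_id t).const_mul s).neg).exp
        have h1 := (he2.const_sub 1).div_const (2 * s)
        have h2 := he1.mul (hdG t ht.1)
        have := h1.sub h2
        refine this.congr_deriv ?_
        have hs0 : s ≠ 0 := hs.ne'
        field_simp
        ring)
      (fun t ht => by
        have h1 := step1 t ⟨le_of_lt ht.1, le_of_lt ht.2⟩
        have hepos : (0:ℝ) < Real.exp (-(s * t)) := Real.exp_pos _
        have h2 : Real.exp (-(s * t)) * (G' t - s * G t) ≤
            Real.exp (-(s * t)) * Real.exp (-(s * t)) :=
          mul_le_mul_of_nonneg_left h1 hepos.le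
        have h3 : Real.exp (-(s * t)) * Real.exp (-(s * t)) = Real.exp (-(2 * s * t)) := by
          rw [← Real.exp_add]; congr 1; ring
        show (0:ℝ) ≤ Real.exp (-(2 * s * t)) - Real.exp (-(s * t)) * (G' t - s * G t)
        linarith)
    have hwT : (1 - Real.exp (-(2 * s * 0))) / (2 * s) - Real.exp (-(s * 0)) * G 0 ≤
        (1 - Real.exp (-(2 * s * T))) / (2 * s) - Real.exp (-(s * T)) * G T :=
      step2 T ⟨hT, le_rfl⟩
    rw [hG0] at hwT
    norm_num at hwT
    have hwT' : Real.exp (-(s * T)) * G T ≤ (1 - Real.exp (-(2 * s * T))) / (2 * s) := by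
      linarith
    -- final algebra
    set e1 := Real.exp (s * T) with he1def
    set e2 := Real.exp (-(s * T)) with he2def
    set e3 := Real.exp (-(2 * s * T)) with he3def
    have h5 : e1 * e2 = 1 := by
      rw [he1def, he2def, ← Real.exp_add]; simp
    have h6 : e1 * e3 = e2 := by
      rw [he1def, he2def, he3def, ← Real.exp_add]; congr 1; ring
    have he1pos : (0:ℝ) < e1 := Real.exp_pos _
    have h4 : e1 * (e2 * G T) ≤ e1 * ((1 - e3) / (2 * s)) :=
      mul_le_mul_of_nonneg_left hwT' he1pos.le
    have h7 : G T ≤ e1 * ((1 - e3) / (2 * s)) := by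
      have heq : e1 * (e2 * G T) = (e1 * e2) * G T := by ring
      rw [heq, h5, one_mul] at h4
      exact h4
    have h8 : e1 * ((1 - e3) / (2 * s)) = (e1 - e2) / (2 * s) := by
      rw [← h6]; field_simp
    rw [Real.sinh_eq]
    rw [div_div]
    rw [show Real.exp (-(s * T)) = e2 from rfl]
    have : (Real.exp (s * T) - e2) / (2 * s) = (e1 - e2) / (2 * s) := by rw [← he1def]
    rw [this]
    linarith [h7, h8]
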